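/- For n×n matrices X and Y over a field (or ℝ), the matrix exponential of the 2n×2n block matrix [[X,Y],[0,X]] has the block form [[exp(X), D],[0, exp(X)]] where D = ∫₀¹ exp(sX)·Y·exp((1-s)X) ds equals the directional derivative of the matrix exponential at X in direction Y. -/

import Mathlib

open Matrix NormedSpace intervalIntegral MeasureTheory

set_option linter.unusedSectionVars false


@[reducible] noncomputable def matNR {m : Type*} [Fintype m] [DecidableEq m] : NormedRing (Matrix m m ℝ) :=
  { (inferInstance : Ring (Matrix m m ℝ)) with
    toNorm := Matrix.linftyOpNormedRing.toNorm
    toMetricSpace := Matrix.linftyOpNormedRing.toMetricSpace.replaceUniformity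
      (U := (inferInstance : UniformSpace (Matrix m m ℝ))) rfl
    dist_eq := Matrix.linftyOpNormedRing.dist_eq
    norm_mul_le := Matrix.linftyOpNormedRing.norm_mul_le }

@[reducible] noncomputable def matNA {m : Type*} [Fintype m] [DecidableEq m] :
    @NormedAlgebra ℝ (Matrix m m ℝ) _ matNR.toSeminormedRing :=
  @NormedAlgebra.mk ℝ (Matrix m m ℝ) _ matNR.toSeminormedRing
    (inferInstance : Algebra ℝ (Matrix m m ℝ))
    (fun r A => Matrix.linftyOpNormedAlgebra.norm_smul_le r A)

@[reducible] noncomputable def matNAQ {m : Type*} [Fintype m] [DecidableEq m] :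
    @NormedAlgebra ℚ (Matrix m m ℝ) _ matNR.toSeminormedRing :=
  @NormedAlgebra.mk ℚ (Matrix m m ℝ) _ matNR.toSeminormedRing
    (inferInstance : Algebra ℚ (Matrix m m ℝ))
    (fun q A => by
      have h := matNA.norm_smul_le (q : ℝ) A
      rwa [Rat.cast_smul_eq_qsmul, Rat.norm_cast_real] at h)

attribute [local instance] matNR matNA matNAQ

set_option linter.unusedSectionVars false

section Aux
variable {m : Type*} [Fintype m] [DecidableEq m]

noncomputable def entryCLM (i j : m) : Matrix m m ℝ →L[ℝ] ℝ :=
  LinearMap.toContinuousLinearMap (Matrix.entryLinearMap ℝ ℝ i j)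

@[simp] lemma entryCLM_apply (i j : m) (A : Matrix m m ℝ) : entryCLM i j A = A i j := rfl

lemma cont_exp_smul (X : Matrix m m ℝ) : Continuous fun s : ℝ => exp (s • X) :=
  exp_continuous.comp (continuous_id.smul continuous_const)

lemma exp_smul_mul_exp_smul (X : Matrix m m ℝ) (a b : ℝ) :
    exp (a • X) * exp (b • X) = exp ((a + b) • X) := by
  rw [add_smul, NormedSpace.exp_add_of_commute (((Commute.refl X).smul_left a).smul_right b)]

lemma duhamel (X B : Matrix m m ℝ) :
    exp B - exp X = ∫ s in (0:ℝ)..1, exp (s • B) * (B - X) * exp ((1 - s) • X) := by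
  have hg : ∀ s : ℝ, HasDerivAt (fun u : ℝ => exp (u • B) * exp ((1 - u) • X))
      (exp (s • B) * (B - X) * exp ((1 - s) • X)) s := by
    intro s
    have hu : HasDerivAt (fun u : ℝ => exp (u • B)) (exp (s • B) * B) s :=
      hasDerivAt_exp_smul_const B s
    have hinner : HasDerivAt (fun u : ℝ => 1 - u) (-1) s := by
      simpa using (hasDerivAt_id s).const_sub 1
    have hv : HasDerivAt (fun u : ℝ => exp ((1 - u) • X))
        ((-1 : ℝ) • (exp ((1 - s) • X) * X)) s :=
      (hasDerivAt_exp_smul_const X (1 - s)).scomp s hinner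
    have hc : X * exp ((1 - s) • X) = exp ((1 - s) • X) * X :=
      (((Commute.refl X).smul_right (1 - s)).exp_right)
    have h := hu.mul hv
    refine h.congr_deriv (Eq.symm ?_)
    rw [mul_sub, sub_mul]
    simp only [neg_one_smul, mul_neg, ← sub_eq_add_neg, ← hc, ← mul_assoc]
  have hint : IntervalIntegrable
      (fun s : ℝ => exp (s • B) * (B - X) * exp ((1 - s) • X)) volume 0 1 := by
    apply Continuous.intervalIntegrable
    exact ((cont_exp_smul B).mul continuous_const).mul
      (exp_continuous.comp ((continuous_const.sub continuous_id).smul continuous_const))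
  have := intervalIntegral.integral_eq_sub_of_hasDerivAt (fun s _ => hg s) hint
  rw [this]
  simp [exp_zero]

end Aux

section Aux2
variable {m : Type*} [Fintype m] [DecidableEq m]

lemma hasDerivAt_exp_dir (X Y : Matrix m m ℝ) :
    HasDerivAt (fun t : ℝ => exp (X + t • Y))
      (∫ s in (0:ℝ)..1, exp (s • X) * Y * exp ((1 - s) • X)) 0 := by
  set F : ℝ → Matrix m m ℝ :=
    fun t => ∫ s in (0:ℝ)..1, exp (s • (X + t • Y)) * Y * exp ((1 - s) • X) with hF
  have hcont : Continuous F := by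
    apply intervalIntegral.continuous_parametric_intervalIntegral_of_continuous'
    apply Continuous.mul
    · apply Continuous.mul
      · exact exp_continuous.comp (continuous_snd.smul
          (continuous_const.add (continuous_fst.smul continuous_const)))
      · exact continuous_const
    · exact exp_continuous.comp ((continuous_const.sub continuous_snd).smul continuous_const)
  have key : ∀ t : ℝ, exp (X + t • Y) = exp X + t • F t := by
    intro t
    have h := duhamel X (X + t • Y)
    rw [add_sub_cancel_left] at h
    have h2 : (∫ s in (0:ℝ)..1, exp (s • (X + t • Y)) * (t • Y) * exp ((1 - s) • X))
        = t • F t := by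
      rw [hF, ← intervalIntegral.integral_smul]
      congr 1
      funext s
      rw [mul_smul_comm, smul_mul_assoc]
    rw [h2] at h
    exact sub_eq_iff_eq_add'.mp h
  have hF0 : F 0 = ∫ s in (0:ℝ)..1, exp (s • X) * Y * exp ((1 - s) • X) := by
    simp [hF]
  refine hasDerivAt_iff_tendsto_slope.mpr ?_
  rw [← hF0]
  have htend : Filter.Tendsto F (nhdsWithin (0:ℝ) {(0:ℝ)}ᶜ) (nhds (F 0)) :=
    (hcont.tendsto 0).mono_left nhdsWithin_le_nhds
  refine htend.congr' ?_
  filter_upwards [self_mem_nhdsWithin] with t ht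
  have ht' : t ≠ 0 := ht
  rw [slope_def_module]
  rw [key t, key 0]
  simp only [zero_smul, add_zero, sub_zero]
  rw [add_sub_cancel_left, smul_smul, inv_mul_cancel₀ ht', one_smul]
end Aux2

section Aux3
variable {m : Type*} [Fintype m] [DecidableEq m]

noncomputable def ulCLM : Matrix m m ℝ →L[ℝ] Matrix (m ⊕ m) (m ⊕ m) ℝ :=
  LinearMap.toContinuousLinearMap
    { toFun := fun A => Matrix.fromBlocks A 0 0 0
      map_add' := fun A B => by rw [Matrix.fromBlocks_add]; simp
      map_smul' := fun c A => by rw [Matrix.fromBlocks_smul]; simp }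

noncomputable def urCLM : Matrix m m ℝ →L[ℝ] Matrix (m ⊕ m) (m ⊕ m) ℝ :=
  LinearMap.toContinuousLinearMap
    { toFun := fun A => Matrix.fromBlocks 0 A 0 0
      map_add' := fun A B => by rw [Matrix.fromBlocks_add]; simp
      map_smul' := fun c A => by rw [Matrix.fromBlocks_smul]; simp }

noncomputable def lrCLM : Matrix m m ℝ →L[ℝ] Matrix (m ⊕ m) (m ⊕ m) ℝ :=
  LinearMap.toContinuousLinearMap
    { toFun := fun A => Matrix.fromBlocks 0 0 0 A
      map_add' := fun A B => by rw [Matrix.fromBlocks_add]; simp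
      map_smul' := fun c A => by rw [Matrix.fromBlocks_smul]; simp }

@[simp] lemma ulCLM_apply (A : Matrix m m ℝ) : (ulCLM A) = Matrix.fromBlocks A 0 0 0 := rfl
@[simp] lemma urCLM_apply (A : Matrix m m ℝ) : (urCLM A) = Matrix.fromBlocks 0 A 0 0 := rfl
@[simp] lemma lrCLM_apply (A : Matrix m m ℝ) : (lrCLM A) = Matrix.fromBlocks 0 0 0 A := rfl

lemma fromBlocks_eq_sum (A B C : Matrix m m ℝ) :
    Matrix.fromBlocks A B 0 C = ulCLM A + urCLM B + lrCLM C := by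
  simp [Matrix.fromBlocks_add]

end Aux3

section Aux4
variable {m : Type*} [Fintype m] [DecidableEq m]

lemma block_exp (X Y : Matrix m m ℝ) :
    exp (Matrix.fromBlocks X Y 0 X) =
      Matrix.fromBlocks (exp X)
        ((∫ s in (0:ℝ)..1, exp (s • X) * Y * exp ((-s) • X)) * exp X)
        0 (exp X) := by
  set A : Matrix (m ⊕ m) (m ⊕ m) ℝ := Matrix.fromBlocks X Y 0 X with hA
  set f : ℝ → Matrix m m ℝ := fun s => exp (s • X) * Y * exp ((-s) • X) with hf
  have hfc : Continuous f :=
    ((cont_exp_smul X).mul continuous_const).mul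
      (exp_continuous.comp (continuous_id.neg.smul continuous_const))
  set C : ℝ → Matrix m m ℝ := fun t => ∫ s in (0:ℝ)..t, f s with hC
  have hCd : ∀ t : ℝ, HasDerivAt C (f t) t := fun t =>
    (hfc.integral_hasStrictDerivAt 0 t).hasDerivAt
  set Φ : ℝ → Matrix (m ⊕ m) (m ⊕ m) ℝ :=
    fun t => Matrix.fromBlocks (exp (t • X)) (C t * exp (t • X)) 0 (exp (t • X)) with hΦ
  have hΦd : ∀ t : ℝ, HasDerivAt Φ (Φ t * A) t := by
    intro t
    have he : HasDerivAt (fun u : ℝ => exp (u • X)) (exp (t • X) * X) t :=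
      hasDerivAt_exp_smul_const X t
    have h2 : HasDerivAt (fun u : ℝ => C u * exp (u • X))
        (f t * exp (t • X) + C t * (exp (t • X) * X)) t := (hCd t).mul he
    have h1 : HasDerivAt (fun u : ℝ => (ulCLM (exp (u • X)) : Matrix (m ⊕ m) (m ⊕ m) ℝ))
        (ulCLM (exp (t • X) * X)) t := by
      simpa [Function.comp_def] using ulCLM.hasFDerivAt.comp_hasDerivAt t he
    have h2' : HasDerivAt (fun u : ℝ => (urCLM (C u * exp (u • X)) : Matrix (m ⊕ m) (m ⊕ m) ℝ))
        (urCLM (f t * exp (t • X) + C t * (exp (t • X) * X))) t := by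
      simpa [Function.comp_def] using urCLM.hasFDerivAt.comp_hasDerivAt t h2
    have h3 : HasDerivAt (fun u : ℝ => (lrCLM (exp (u • X)) : Matrix (m ⊕ m) (m ⊕ m) ℝ))
        (lrCLM (exp (t • X) * X)) t := by
      simpa [Function.comp_def] using lrCLM.hasFDerivAt.comp_hasDerivAt t he
    have hsum := (h1.add h2').add h3
    have hΦeq : Φ = fun u : ℝ =>
        ulCLM (exp (u • X)) + urCLM (C u * exp (u • X)) + lrCLM (exp (u • X)) := by
      funext u; rw [hΦ, ← fromBlocks_eq_sum]
    have hfe : f t * exp (t • X) = exp (t • X) * Y := by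
      rw [hf]
      simp only [mul_assoc]
      rw [exp_smul_mul_exp_smul X (-t) t]
      simp [exp_zero]
    have hval : Φ t * A = ulCLM (exp (t • X) * X)
        + urCLM (f t * exp (t • X) + C t * (exp (t • X) * X)) + lrCLM (exp (t • X) * X) := by
      simp only [hΦ, hA]
      rw [Matrix.fromBlocks_multiply, ← fromBlocks_eq_sum]
      simp only [mul_zero, zero_mul, add_zero, zero_add, mul_assoc, hfe]
    rw [hval, hΦeq]
    exact hsum
  set K : ℝ → Matrix (m ⊕ m) (m ⊕ m) ℝ := fun t => Φ t * exp (t • (-A)) with hK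
  have hKd : ∀ t : ℝ, HasDerivAt K 0 t := by
    intro t
    have hE : HasDerivAt (fun u : ℝ => exp (u • (-A))) (exp (t • (-A)) * -A) t :=
      hasDerivAt_exp_smul_const (-A) t
    have h := (hΦd t).mul hE
    refine h.congr_deriv (Eq.symm ?_)
    have hcomm : exp (t • (-A)) * A = A * exp (t • (-A)) :=
      ((((Commute.refl A).neg_right).smul_right t).exp_right).symm
    rw [mul_neg, hcomm, mul_neg, ← mul_assoc, add_neg_cancel]
  have hconst : K 1 = K 0 :=
    is_const_of_deriv_eq_zero (fun t => (hKd t).differentiableAt)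
      (fun t => (hKd t).deriv) 1 0
  have hK0 : K 0 = 1 := by
    rw [hK, hΦ]
    simp [hC, intervalIntegral.integral_same, Matrix.fromBlocks_one, exp_zero]
  have hK1 : Φ 1 * exp (-A) = 1 := by
    have := hconst.trans hK0
    rw [hK] at this
    simpa using this
  have hinv : exp (-A) * exp A = 1 := by
    rw [← NormedSpace.exp_add_of_commute ((Commute.refl A).neg_left)]
    simp [exp_zero]
  have hΦ1 : Φ 1 = exp A := by
    calc Φ 1 = Φ 1 * (exp (-A) * exp A) := by rw [hinv, mul_one]
    _ = (Φ 1 * exp (-A)) * exp A := by rw [mul_assoc]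
    _ = exp A := by rw [hK1, one_mul]
  rw [← hΦ1, hΦ]
  simp [hC, hf]
end Aux4

/-- Mathias' theorem: for `n×n` real matrices `X, Y`, the exponential of
the block matrix `[[X,Y],[0,X]]` equals `[[exp X, D],[0, exp X]]`, where
`D = ∫₀¹ exp(sX)·Y·exp((1-s)X) ds` (entrywise integral), and `D` is the directional
derivative of the matrix exponential at `X` in direction `Y`. -/
theorem mathias_block_exp (n : ℕ) (X Y : Matrix (Fin n) (Fin n) ℝ)
    (D : Matrix (Fin n) (Fin n) ℝ)
    (hD : ∀ i j, D i j =
      ∫ s in (0:ℝ)..1,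
        (NormedSpace.exp (s • X) * Y * NormedSpace.exp ((1 - s) • X)) i j) :
    NormedSpace.exp (Matrix.fromBlocks X Y 0 X) =
      Matrix.fromBlocks (NormedSpace.exp X) D 0 (NormedSpace.exp X) ∧
    ∀ i j, HasDerivAt (fun t : ℝ => NormedSpace.exp (X + t • Y) i j) (D i j) 0 := by
  have hfc : Continuous (fun s : ℝ => exp (s • X) * Y * exp ((-s) • X)) :=
    ((cont_exp_smul X).mul continuous_const).mul
      (exp_continuous.comp (continuous_id.neg.smul continuous_const))
  have hint : IntervalIntegrable (fun s : ℝ => exp (s • X) * Y * exp ((-s) • X))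
      MeasureTheory.volume 0 1 := hfc.intervalIntegrable 0 1
  have hfc2 : Continuous (fun s : ℝ => exp (s • X) * Y * exp ((1 - s) • X)) :=
    ((cont_exp_smul X).mul continuous_const).mul
      (exp_continuous.comp ((continuous_const.sub continuous_id).smul continuous_const))
  have hint2 : IntervalIntegrable (fun s : ℝ => exp (s • X) * Y * exp ((1 - s) • X))
      MeasureTheory.volume 0 1 := hfc2.intervalIntegrable 0 1
  have hpt : ∀ s : ℝ, exp ((-s) • X) * exp X = exp ((1 - s) • X) := by
    intro s
    have h := exp_smul_mul_exp_smul X (-s) 1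
    rw [one_smul, neg_add_eq_sub] at h
    exact h
  constructor
  · have hDeq : D = (∫ s in (0:ℝ)..1, exp (s • X) * Y * exp ((-s) • X)) * exp X := by
      ext i j
      set ψ : Matrix (Fin n) (Fin n) ℝ →L[ℝ] ℝ :=
        LinearMap.toContinuousLinearMap
          ((Matrix.entryLinearMap ℝ ℝ i j).comp (LinearMap.mulRight ℝ (exp X))) with hψdef
      have hψ : ∀ Z : Matrix (Fin n) (Fin n) ℝ, ψ Z = (Z * exp X) i j := fun Z => rfl
      have hcc := ψ.intervalIntegral_comp_comm hint
      have hpt2 : ∀ s : ℝ, (exp (s • X) * Y * exp ((1 - s) • X)) i j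
          = ψ (exp (s • X) * Y * exp ((-s) • X)) := by
        intro s
        rw [hψ, mul_assoc (exp (s • X) * Y), hpt s]
      rw [hD i j]
      simp only [hpt2]
      rw [hcc, hψ]
    rw [block_exp X Y, hDeq]
  · intro i j
    have hL : entryCLM i j (∫ s in (0:ℝ)..1, exp (s • X) * Y * exp ((1 - s) • X)) = D i j := by
      rw [hD i j]
      exact ((entryCLM i j).intervalIntegral_comp_comm hint2).symm
    have h2 := (entryCLM i j).hasFDerivAt.comp_hasDerivAt 0 (hasDerivAt_exp_dir X Y)
    rw [hL] at h2
    simpa [Function.comp_def] using h2
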